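/- arXiv:1912.04082 — 2 statements merged into one kernel-verified Lean document; each statement's English description precedes it below -/
import Mathlib

section
/- Let n ≥ 1 and let D be a real symmetric n×n matrix. Then D is a Euclidean distance matrix — i.e., there exist points x₁, …, xₙ ∈ ℝⁿ (the Euclidean space of dimension n) such that Dᵢⱼ = ‖xᵢ − xⱼ‖₂² for all i, j — if and only if −C D C is positive semidefinite and Dᵢᵢ = 0 for all i. -/
open Matrix BigOperators

/-- Positive semidefiniteness: zᵀ M z ≥ 0 for all z ∈ ℝⁿ. -/
def PSD (n : ℕ) (M : Matrix (Fin n) (Fin n) ℝ) : Prop :=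
  ∀ z : Fin n → ℝ, 0 ≤ z ⬝ᵥ (M *ᵥ z)

/-- The centering matrix C = Iₙ − (1/n)·𝟏𝟏ᵀ. -/
noncomputable def Cmat (n : ℕ) : Matrix (Fin n) (Fin n) ℝ :=
  1 - ((n : ℝ)⁻¹) • Matrix.vecMulVec (fun _ => 1) (fun _ => 1)

lemma Cmat_apply (n : ℕ) (i j : Fin n) :
    Cmat n i j = (if i = j then 1 else 0) - (n : ℝ)⁻¹ := by
  simp [Cmat, Matrix.one_apply, vecMulVec_apply]

lemma Cmat_symm (n : ℕ) : (Cmat n)ᵀ = Cmat n := by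
  ext i j
  simp [Matrix.transpose_apply, Cmat_apply, eq_comm]

lemma sum_cmat_mulVec (n : ℕ) (hn : 1 ≤ n) (z : Fin n → ℝ) :
    ∑ i, (Cmat n *ᵥ z) i = 0 := by
  have hn' : (n : ℝ) ≠ 0 := by positivity
  simp only [mulVec, dotProduct, Cmat_apply]
  simp only [sub_mul, Finset.sum_sub_distrib, ite_mul, one_mul, zero_mul,
    Finset.sum_ite_eq, Finset.mem_univ, if_true]
  rw [Finset.sum_const, Finset.card_univ, Fintype.card_fin, ← Finset.mul_sum,
    nsmul_eq_mul, ← mul_assoc, mul_inv_cancel₀ hn', one_mul, sub_self]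

lemma Cmul_apply (n : ℕ) (M : Matrix (Fin n) (Fin n) ℝ) (i j : Fin n) :
    (Cmat n * M) i j = M i j - (n : ℝ)⁻¹ * ∑ k, M k j := by
  simp only [mul_apply, Cmat_apply, sub_mul, Finset.sum_sub_distrib, ite_mul, one_mul,
    zero_mul, Finset.sum_ite_eq, Finset.mem_univ, if_true, Finset.mul_sum]

lemma mulC_apply (n : ℕ) (M : Matrix (Fin n) (Fin n) ℝ) (i j : Fin n) :
    (M * Cmat n) i j = M i j - (n : ℝ)⁻¹ * ∑ k, M i k := by
  simp only [mul_apply, Cmat_apply, mul_sub, Finset.sum_sub_distrib, mul_ite, mul_one,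
    mul_zero, Finset.sum_ite_eq', Finset.mem_univ, if_true]
  rw [← Finset.sum_mul, mul_comm]

lemma CDC_apply (n : ℕ) (D : Matrix (Fin n) (Fin n) ℝ) (i j : Fin n) :
    (Cmat n * D * Cmat n) i j =
      D i j - (n : ℝ)⁻¹ * (∑ k, D k j) - (n : ℝ)⁻¹ * (∑ k, D i k)
        + (n : ℝ)⁻¹ * (n : ℝ)⁻¹ * (∑ k, ∑ l, D l k) := by
  rw [mulC_apply]
  have h1 : ∑ k, (Cmat n * D) i k
      = (∑ k, D i k) - (n : ℝ)⁻¹ * ∑ k, ∑ l, D l k := by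
    rw [Finset.sum_congr rfl (fun k _ => Cmul_apply n D i k),
      Finset.sum_sub_distrib, ← Finset.mul_sum]
  rw [h1, Cmul_apply]
  ring

open RealInnerProductSpace in
lemma quad_eq {n : ℕ} (x : Fin n → EuclideanSpace ℝ (Fin n))
    (D : Matrix (Fin n) (Fin n) ℝ) (hx : ∀ i j, D i j = ‖x i - x j‖ ^ 2)
    (w : Fin n → ℝ) (hw : ∑ i, w i = 0) :
    w ⬝ᵥ (D *ᵥ w) = -2 * ⟪∑ i, w i • x i, ∑ i, w i • x i⟫ := by
  have hS : ⟪∑ i, w i • x i, ∑ i, w i • x i⟫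
      = ∑ i, ∑ j, w i * (w j * ⟪x i, x j⟫) := by
    simp only [sum_inner, inner_sum, real_inner_smul_left, real_inner_smul_right,
      Finset.mul_sum]
    exact Finset.sum_comm.trans <| Finset.sum_congr rfl fun i _ =>
      Finset.sum_congr rfl fun j _ => by rw [real_inner_comm]; ring
  have e1 : ∑ i, ∑ j, w i * w j * ‖x i‖ ^ 2 = 0 := by
    have h : ∀ i, ∑ j, w i * w j * ‖x i‖ ^ 2 = (w i * ‖x i‖ ^ 2) * ∑ j, w j := fun i => by
      rw [Finset.mul_sum]; exact Finset.sum_congr rfl fun j _ => by ring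
    rw [Finset.sum_congr rfl fun i _ => h i]
    simp [hw]
  have e2 : ∑ i, ∑ j, w i * w j * ‖x j‖ ^ 2 = 0 := by
    have h : ∀ i, ∑ j, w i * w j * ‖x j‖ ^ 2 = w i * ∑ j, w j * ‖x j‖ ^ 2 := fun i => by
      rw [Finset.mul_sum]; exact Finset.sum_congr rfl fun j _ => by ring
    rw [Finset.sum_congr rfl fun i _ => h i, ← Finset.sum_mul, hw, zero_mul]
  have main : w ⬝ᵥ (D *ᵥ w)
      = ∑ i, ∑ j, (w i * w j * ‖x i‖ ^ 2 + w i * w j * ‖x j‖ ^ 2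
          - 2 * (w i * (w j * ⟪x i, x j⟫))) := by
    simp only [dotProduct, mulVec, Finset.mul_sum]
    refine Finset.sum_congr rfl fun i _ => Finset.sum_congr rfl fun j _ => ?_
    rw [hx i j, norm_sub_sq_real]; ring
  rw [main]
  simp only [Finset.sum_add_distrib, Finset.sum_sub_distrib, e1, e2]
  have h2 : ∑ i, ∑ j, 2 * (w i * (w j * ⟪x i, x j⟫))
      = 2 * ∑ i, ∑ j, w i * (w j * ⟪x i, x j⟫) := by
    rw [Finset.mul_sum]
    exact Finset.sum_congr rfl fun i _ => (Finset.mul_sum _ _ _).symm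
  rw [h2, ← hS]; ring

open RealInnerProductSpace in
theorem euclidean_distance_matrix_iff' (n : ℕ) (hn : 1 ≤ n)
    (D : Matrix (Fin n) (Fin n) ℝ) (hsymm : D.IsSymm) :
    (∃ x : Fin n → EuclideanSpace ℝ (Fin n),
        ∀ i j, D i j = ‖x i - x j‖ ^ 2) ↔
      ((∀ z : Fin n → ℝ, 0 ≤ z ⬝ᵥ (-(Cmat n * D * Cmat n) *ᵥ z)) ∧ ∀ i, D i i = 0) := by
  constructor
  · rintro ⟨x, hx⟩
    refine ⟨fun z => ?_, fun i => by simp [hx i i]⟩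
    set w := Cmat n *ᵥ z with hwdef
    have hw : ∑ i, w i = 0 := sum_cmat_mulVec n hn z
    have h1 : z ⬝ᵥ (-(Cmat n * D * Cmat n) *ᵥ z) = -(w ⬝ᵥ (D *ᵥ w)) := by
      rw [neg_mulVec, dotProduct_neg]
      congr 1
      rw [← mulVec_mulVec, ← mulVec_mulVec, dotProduct_mulVec, ← mulVec_transpose,
        Cmat_symm]
    rw [h1, quad_eq x D hx w hw]
    have h2 := real_inner_self_nonneg (x := ∑ i, w i • x i)
    linarith
  · rintro ⟨hpsd, hdiag⟩
    have htr : (Cmat n * D * Cmat n)ᵀ = Cmat n * D * Cmat n := by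
      rw [transpose_mul, transpose_mul, Cmat_symm, hsymm, Matrix.mul_assoc]
    have hM : (-(Cmat n * D * Cmat n)).PosSemidef := by
      refine posSemidef_iff_dotProduct_mulVec.mpr ⟨?_, ?_⟩
      · rw [Matrix.IsHermitian, conjTranspose_eq_transpose_of_trivial, transpose_neg, htr]
      · intro z; simpa using hpsd z
    have hG : ((2 : ℝ)⁻¹ • (-(Cmat n * D * Cmat n))).PosSemidef := by
      refine posSemidef_iff_dotProduct_mulVec.mpr ⟨?_, ?_⟩
      · rw [Matrix.IsHermitian, conjTranspose_eq_transpose_of_trivial, transpose_smul,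
          transpose_neg, htr]
      · intro z
        have := hM.dotProduct_mulVec_nonneg z
        simp only [smul_mulVec, dotProduct_smul, smul_eq_mul]
        positivity
    obtain ⟨B, hB⟩ : ∃ B : Matrix (Fin n) (Fin n) ℝ,
        (2 : ℝ)⁻¹ • (-(Cmat n * D * Cmat n)) = Bᴴ * B := by
      open scoped MatrixOrder Matrix.Norms.L2Operator in
      exact CStarAlgebra.nonneg_iff_eq_star_mul_self.mp hG.nonneg
    have hGij : ∀ i j, ((2 : ℝ)⁻¹ • (-(Cmat n * D * Cmat n))) i j = ∑ k, B k i * B k j :=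
      fun i j => by rw [hB]; simp [mul_apply, conjTranspose_apply]
    have hGentry : ∀ i j, ((2 : ℝ)⁻¹ • (-(Cmat n * D * Cmat n))) i j
        = -(2 : ℝ)⁻¹ * ((Cmat n * D * Cmat n) i j) := fun i j => by
      simp
    refine ⟨fun a => (WithLp.equiv 2 (Fin n → ℝ)).symm (fun k => B k a), fun i j => ?_⟩
    show D i j = ‖(WithLp.equiv 2 (Fin n → ℝ)).symm (fun k => B k i)
      - (WithLp.equiv 2 (Fin n → ℝ)).symm (fun k => B k j)‖ ^ 2
    have hsub : ((WithLp.equiv 2 (Fin n → ℝ)).symm (fun k => B k i) : EuclideanSpace ℝ (Fin n))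
        - (WithLp.equiv 2 (Fin n → ℝ)).symm (fun k => B k j)
        = (WithLp.equiv 2 (Fin n → ℝ)).symm (fun k => B k i - B k j) := rfl
    have hnorm : ‖((WithLp.equiv 2 (Fin n → ℝ)).symm (fun k => B k i) : EuclideanSpace ℝ (Fin n))
        - (WithLp.equiv 2 (Fin n → ℝ)).symm (fun k => B k j)‖ ^ 2
        = ∑ k, (B k i - B k j) * (B k i - B k j) := by
      rw [hsub, ← real_inner_self_eq_norm_sq]
      simp only [PiLp.inner_apply, RCLike.inner_apply, WithLp.equiv_symm_apply]
      exact Finset.sum_congr rfl fun k _ => by simp [mul_comm]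
    have key : ∑ k, (B k i - B k j) * (B k i - B k j)
        = ((2:ℝ)⁻¹ • (-(Cmat n * D * Cmat n))) i i
          + ((2:ℝ)⁻¹ • (-(Cmat n * D * Cmat n))) j j
          - 2 * ((2:ℝ)⁻¹ • (-(Cmat n * D * Cmat n))) i j := by
      calc ∑ k, (B k i - B k j) * (B k i - B k j)
          = ∑ k, (B k i * B k i + B k j * B k j - 2 * (B k i * B k j)) :=
            Finset.sum_congr rfl fun k _ => by ring
        _ = ((∑ k, B k i * B k i) + ∑ k, B k j * B k j) - 2 * ∑ k, B k i * B k j := by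
            rw [Finset.sum_sub_distrib, Finset.sum_add_distrib, Finset.mul_sum]
        _ = _ := by rw [hGij, hGij, hGij]
    have hcol : ∀ a, (∑ k, D k a) = ∑ k, D a k :=
      fun a => Finset.sum_congr rfl fun k _ => hsymm.apply a k
    rw [hnorm, key, hGentry i i, hGentry j j, hGentry i j, CDC_apply, CDC_apply, CDC_apply,
      hcol i, hcol j, hdiag i, hdiag j]
    ring

/-- Theorem 2 of the paper (Schoenberg's characterization of Euclidean
    distance matrices). -/
theorem euclidean_distance_matrix_iff (n : ℕ) (hn : 1 ≤ n)
    (D : Matrix (Fin n) (Fin n) ℝ) (hsymm : D.IsSymm) :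
    (∃ x : Fin n → EuclideanSpace ℝ (Fin n),
        ∀ i j, D i j = ‖x i - x j‖ ^ 2) ↔
      (PSD n (-(Cmat n * D * Cmat n)) ∧ ∀ i, D i i = 0) := by
  exact euclidean_distance_matrix_iff' n hn D hsymm
end

section
/- Let n ≥ 1 and let x₁, …, xₙ be points in a Euclidean space ℝᵏ. If D is the n×n matrix with Dᵢⱼ = ‖xᵢ − xⱼ‖₂², then −C D C is positive semidefinite and Dᵢᵢ = 0 for all i. -/
open Matrix BigOperators

/-- Forward direction of Theorem 2 of the paper: the Euclidean distance
    matrix of a set of points has −C D C ⪰ 0 and zero diagonal. -/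
theorem edm_neg_CDC_psd (n : ℕ) (hn : 1 ≤ n) (k : ℕ)
    (x : Fin n → EuclideanSpace ℝ (Fin k))
    (D : Matrix (Fin n) (Fin n) ℝ)
    (hD : ∀ i j, D i j = ‖x i - x j‖ ^ 2) :
    PSD n (-(Cmat n * D * Cmat n)) ∧ ∀ i, D i i = 0 := by
  have hn0 : (n : ℝ) ≠ 0 := by positivity
  constructor
  · intro z
    set w : Fin n → ℝ := Cmat n *ᵥ z with hw
    have hsym : (Cmat n)ᵀ = Cmat n := by
      unfold Cmat
      ext i j
      simp [Matrix.vecMulVec, Matrix.one_apply, eq_comm]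
    -- sum of w is zero
    have hsum : ∑ i, w i = 0 := by
      have : ∀ i, w i = z i - (n:ℝ)⁻¹ * ∑ j, z j := by
        intro i
        simp [hw, Cmat, Matrix.mulVec, dotProduct, Matrix.vecMulVec,
          Matrix.one_apply, sub_mul, Finset.sum_sub_distrib, Finset.mul_sum]
      rw [Finset.sum_congr rfl fun i _ => this i]
      rw [Finset.sum_sub_distrib, Finset.sum_const, Finset.card_univ, Fintype.card_fin, nsmul_eq_mul]
      field_simp
      ring
    -- rewrite the quadratic form
    have hquad : z ⬝ᵥ ((-(Cmat n * D * Cmat n)) *ᵥ z) = -(w ⬝ᵥ (D *ᵥ w)) := by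
      rw [Matrix.neg_mulVec, dotProduct_neg]
      congr 1
      rw [← Matrix.mulVec_mulVec, ← Matrix.mulVec_mulVec,
        Matrix.dotProduct_mulVec, ← hsym, Matrix.vecMul_transpose, hsym]
    set y : EuclideanSpace ℝ (Fin k) := ∑ j, w j • x j with hy
    set T : ℝ := ∑ j, ‖x j‖ ^ 2 * w j with hT
    have hDw : ∀ i, (D *ᵥ w) i = ‖x i‖ ^ 2 * (∑ j, w j) + T - 2 * (inner ℝ (x i) y : ℝ) := by
      intro i
      have h1 : ∀ j, D i j * w j
          = ‖x i‖ ^ 2 * w j + ‖x j‖ ^ 2 * w j - 2 * (w j * (inner ℝ (x i) (x j) : ℝ)) := by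
        intro j
        rw [hD, norm_sub_sq_real]
        ring
      have h2 : (inner ℝ (x i) y : ℝ) = ∑ j, w j * (inner ℝ (x i) (x j) : ℝ) := by
        rw [hy, inner_sum]
        exact Finset.sum_congr rfl fun j _ => real_inner_smul_right _ _ _
      simp only [Matrix.mulVec, dotProduct]
      rw [Finset.sum_congr rfl fun j _ => h1 j, Finset.sum_sub_distrib,
        Finset.sum_add_distrib, ← Finset.mul_sum, ← Finset.mul_sum, h2, hT]
    have hyy : (inner ℝ y y : ℝ) = ∑ i, w i * (inner ℝ (x i) y : ℝ) := by
      conv_lhs => rw [hy, sum_inner]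
      exact Finset.sum_congr rfl fun i _ => real_inner_smul_left _ _ _
    have hmain : w ⬝ᵥ (D *ᵥ w) = -2 * (inner ℝ y y : ℝ) := by
      simp only [dotProduct]
      rw [Finset.sum_congr rfl fun i _ => by rw [hDw i, hsum]]
      have : ∑ i, w i * (‖x i‖ ^ 2 * 0 + T - 2 * (inner ℝ (x i) y : ℝ))
          = (∑ i, w i) * T - 2 * ∑ i, w i * (inner ℝ (x i) y : ℝ) := by
        rw [Finset.sum_mul, Finset.mul_sum, ← Finset.sum_sub_distrib]
        exact Finset.sum_congr rfl fun i _ => by ring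
      rw [this, hsum, hyy]
      ring
    rw [hquad, hmain]
    have := real_inner_self_nonneg (x := y)
    linarith
  · intro i
    simp [hD]
end
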